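/- Let x ∈ ℝ^d and y_1, …, y_n ∈ ℝ^d (the SAGA memory points). Then (1/(2L)) · (1/n) ∑_{i=1}^n ‖∇f_i(y_i) − ∇f_i(x*)‖² ≤ f(x) − f(x*) + ∑_{i=1}^n D_{f_i}(y_i, x*) − [ (1/n) ∑_{i=1}^n D_{f_i}(x, x*) + ((n−1)/n) ∑_{i=1}^n D_{f_i}(y_i, x*) ], where the bracketed term is the expectation of ∑_{i=1}^n D_{f_i}(ỹ_i, x*) when the updated memory ỹ is obtained from y by replacing y_i by x for a uniformly random index i ∈ {1,…,n}. -/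

import Mathlib

open InnerProductSpace Finset

local notation "⟪" a ", " b "⟫" => @inner ℝ _ _ a b

section aux

variable {d : ℕ}

/-- Derivative of `g` along a segment. -/
lemma hasDerivAt_line {g : EuclideanSpace ℝ (Fin d) → ℝ} (hg : Differentiable ℝ g)
    (a b : EuclideanSpace ℝ (Fin d)) (t : ℝ) :
    HasDerivAt (fun s : ℝ => g (a + s • (b - a)))
      ⟪gradient g (a + t • (b - a)), b - a⟫ t := by
  have hline : HasDerivAt (fun s : ℝ => a + s • (b - a)) (b - a) t := by
    simpa using ((hasDerivAt_id t).smul_const (b - a)).const_add a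
  have hfd := ((hg (a + t • (b - a))).hasGradientAt).hasFDerivAt
  have := hfd.comp_hasDerivAt t hline
  rw [InnerProductSpace.toDual_apply_apply] at this
  exact this

/-- First-order condition for convexity. -/
lemma grad_ineq {g : EuclideanSpace ℝ (Fin d) → ℝ} (hc : ConvexOn ℝ Set.univ g)
    (hg : Differentiable ℝ g) (a b : EuclideanSpace ℝ (Fin d)) :
    g a + ⟪gradient g a, b - a⟫ ≤ g b := by
  set φ : ℝ → ℝ := fun s => g (a + s • (b - a)) with hφ
  have hφc : ConvexOn ℝ Set.univ φ := by
    have haff : ConvexOn ℝ ((fun s : ℝ => a + s • (b - a)) ⁻¹' Set.univ)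
        (g ∘ (AffineMap.lineMap a b : ℝ →ᵃ[ℝ] _)) := by
      simpa using hc.comp_affineMap (AffineMap.lineMap a b)
    have : (g ∘ (AffineMap.lineMap a b : ℝ →ᵃ[ℝ] _)) = φ := by
      funext s
      show g _ = g _
      congr 1
      simp [AffineMap.lineMap_apply, vsub_eq_sub, vadd_eq_add, add_comm]
    rw [this] at haff
    simpa using haff
  have hder : HasDerivAt φ ⟪gradient g a, b - a⟫ 0 := by
    simpa using hasDerivAt_line hg a b 0
  have hslope := hφc.le_slope_of_hasDerivAt (Set.mem_univ (0:ℝ)) (Set.mem_univ (1:ℝ))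
    one_pos hder
  have h0 : φ 0 = g a := by simp [φ]
  have h1 : φ 1 = g b := by simp [φ]
  rw [slope_def_field] at hslope
  simp only [h0, h1] at hslope
  have : ⟪gradient g a, b - a⟫ ≤ g b - g a := by
    simpa using hslope
  linarith

/-- Descent lemma for `L`-smooth functions. -/
lemma descent_lemma {g : EuclideanSpace ℝ (Fin d) → ℝ} {L : ℝ} (hL : 0 < L)
    (hg : Differentiable ℝ g)
    (hs : ∀ u v, ‖gradient g u - gradient g v‖ ≤ L * ‖u - v‖)
    (a b : EuclideanSpace ℝ (Fin d)) :
    g b ≤ g a + ⟪gradient g a, b - a⟫ + L / 2 * ‖b - a‖ ^ 2 := by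
  set c : ℝ := ⟪gradient g a, b - a⟫
  set ψ : ℝ → ℝ := fun s => g (a + s • (b - a)) - s * c - L / 2 * s ^ 2 * ‖b - a‖ ^ 2 with hψ
  have hder : ∀ t : ℝ, HasDerivAt ψ
      (⟪gradient g (a + t • (b - a)), b - a⟫ - c - L * t * ‖b - a‖ ^ 2) t := by
    intro t
    have h1 := hasDerivAt_line hg a b t
    have h2 : HasDerivAt (fun s : ℝ => s * c) c t := by
      simpa using (hasDerivAt_id t).mul_const c
    have h3 : HasDerivAt (fun s : ℝ => L / 2 * s ^ 2 * ‖b - a‖ ^ 2)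
        (L * t * ‖b - a‖ ^ 2) t := by
      have : HasDerivAt (fun s : ℝ => s ^ 2) (2 * t) t := by
        simpa using hasDerivAt_pow 2 t
      have := (this.const_mul (L / 2)).mul_const (‖b - a‖ ^ 2)
      rw [show L * t * ‖b - a‖ ^ 2 = L / 2 * (2 * t) * ‖b - a‖ ^ 2 by ring]
      exact this
    exact (h1.sub h2).sub h3
  have hdiff : Differentiable ℝ ψ := fun t => (hder t).differentiableAt
  have hanti : AntitoneOn ψ (Set.Icc (0:ℝ) 1) := by
    apply antitoneOn_of_deriv_nonpos (convex_Icc 0 1) (hdiff.continuous.continuousOn)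
      (fun t _ => (hdiff t).differentiableWithinAt)
    intro t ht
    rw [interior_Icc] at ht
    rw [(hder t).deriv]
    have hb : ⟪gradient g (a + t • (b - a)) - gradient g a, b - a⟫
        ≤ L * t * ‖b - a‖ ^ 2 := by
      calc ⟪gradient g (a + t • (b - a)) - gradient g a, b - a⟫
          ≤ ‖gradient g (a + t • (b - a)) - gradient g a‖ * ‖b - a‖ :=
            real_inner_le_norm _ _
        _ ≤ (L * ‖(a + t • (b - a)) - a‖) * ‖b - a‖ := by
            apply mul_le_mul_of_nonneg_right (hs _ _) (norm_nonneg _)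
        _ = L * t * ‖b - a‖ ^ 2 := by
            rw [add_sub_cancel_left, norm_smul]
            simp [abs_of_pos ht.1]
            ring
    rw [inner_sub_left] at hb
    have : ⟪gradient g (a + t • (b - a)), b - a⟫ - c ≤ L * t * ‖b - a‖ ^ 2 := hb
    linarith
  have := hanti (Set.mem_Icc.2 ⟨le_refl 0, zero_le_one⟩)
    (Set.mem_Icc.2 ⟨zero_le_one, le_refl 1⟩) zero_le_one
  have h0 : ψ 0 = g a := by simp [ψ]
  have h1 : ψ 1 = g b - c - L / 2 * ‖b - a‖ ^ 2 := by simp [ψ]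
  rw [h0, h1] at this
  linarith

/-- Cocoercivity of the gradient of a convex `L`-smooth function. -/
lemma cocoercivity {g : EuclideanSpace ℝ (Fin d) → ℝ} {L : ℝ} (hL : 0 < L)
    (hc : ConvexOn ℝ Set.univ g) (hg : Differentiable ℝ g)
    (hs : ∀ u v, ‖gradient g u - gradient g v‖ ≤ L * ‖u - v‖)
    (a b : EuclideanSpace ℝ (Fin d)) :
    1 / (2 * L) * ‖gradient g b - gradient g a‖ ^ 2
      ≤ g b - g a - ⟪gradient g a, b - a⟫ := by
  set h : EuclideanSpace ℝ (Fin d) → ℝ := fun z => g z - ⟪gradient g a, z⟫ with hh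
  have hlin : Differentiable ℝ (fun z : EuclideanSpace ℝ (Fin d) => ⟪gradient g a, z⟫) :=
    fun z => ((toDual ℝ (EuclideanSpace ℝ (Fin d))) (gradient g a)).differentiableAt
  have hhdiff : Differentiable ℝ h := hg.sub hlin
  have hhgrad : ∀ w, HasGradientAt h (gradient g w - gradient g a) w := by
    intro w
    rw [hasGradientAt_iff_hasFDerivAt, map_sub]
    exact ((hg w).hasGradientAt.hasFDerivAt).sub
      ((toDual ℝ (EuclideanSpace ℝ (Fin d))) (gradient g a)).hasFDerivAt
  have hhgrad' : ∀ w, gradient h w = gradient g w - gradient g a :=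
    fun w => (hhgrad w).gradient
  have hhconv : ConvexOn ℝ Set.univ h := by
    apply hc.sub
    refine ⟨convex_univ, ?_⟩
    intro u _ v _ p q _ _ hpq
    simp [inner_add_right, inner_smul_right]
  have hhs : ∀ u v, ‖gradient h u - gradient h v‖ ≤ L * ‖u - v‖ := by
    intro u v; rw [hhgrad', hhgrad']
    simpa using hs u v
  -- h is minimized at a
  have hmin : ∀ z, h a ≤ h z := by
    intro z
    have := grad_ineq hhconv hhdiff a z
    rw [hhgrad'] at this
    simpa using this
  -- apply descent lemma at b with step 1/L
  set w : EuclideanSpace ℝ (Fin d) := b - (1 / L) • gradient h b with hw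
  have hdes := descent_lemma hL hhdiff hhs b w
  have hwb : w - b = -((1 / L) • gradient h b) := by rw [hw]; abel
  have e1 : ⟪gradient h b, w - b⟫ = -(1 / L) * ‖gradient h b‖ ^ 2 := by
    rw [hwb, inner_neg_right, real_inner_smul_right, real_inner_self_eq_norm_sq]
    ring
  have e2 : ‖w - b‖ ^ 2 = (1 / L) ^ 2 * ‖gradient h b‖ ^ 2 := by
    rw [hwb, norm_neg, norm_smul, mul_pow]
    simp [Real.norm_eq_abs, sq_abs]
  rw [e1, e2] at hdes
  have hha := hmin w
  have hL' : L ≠ 0 := ne_of_gt hL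
  have key : 1 / (2 * L) * ‖gradient h b‖ ^ 2 ≤ h b - h a := by
    have : h a ≤ h b + (-(1 / L) * ‖gradient h b‖ ^ 2)
        + L / 2 * ((1 / L) ^ 2 * ‖gradient h b‖ ^ 2) := le_trans hha hdes
    have hc2 : (-(1 / L) * ‖gradient h b‖ ^ 2) + L / 2 * ((1 / L) ^ 2 * ‖gradient h b‖ ^ 2)
        = -(1 / (2 * L)) * ‖gradient h b‖ ^ 2 := by
      field_simp
      ring
    nlinarith [this, hc2]
  rw [hhgrad'] at key
  have heq : h b - h a = g b - g a - ⟪gradient g a, b - a⟫ := by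
    simp only [h, inner_sub_right]
    ring
  rw [heq] at key
  exact key

end aux

/-- Bregman divergence `D_g(y, x) = g(y) − g(x) − ⟨∇g(x), y − x⟩`. -/
noncomputable def bregDiv {d : ℕ} (g : EuclideanSpace ℝ (Fin d) → ℝ)
    (y x : EuclideanSpace ℝ (Fin d)) : ℝ :=
  g y - g x - @inner ℝ _ _ (gradient g x) (y - x)

theorem stmt_3 (n d : ℕ) (hn : 1 ≤ n) (hd : 1 ≤ d) (L : ℝ) (hL : 0 < L)
    (f : Fin n → EuclideanSpace ℝ (Fin d) → ℝ)
    (hconv : ∀ i, ConvexOn ℝ Set.univ (f i))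
    (hdiff : ∀ i, Differentiable ℝ (f i))
    (hsmooth : ∀ i x y, ‖gradient (f i) x - gradient (f i) y‖ ≤ L * ‖x - y‖)
    (F : EuclideanSpace ℝ (Fin d) → ℝ)
    (hF : F = fun x => (n : ℝ)⁻¹ * ∑ i, f i x)
    (xstar : EuclideanSpace ℝ (Fin d)) (hmin : ∀ z, F xstar ≤ F z)
    (x : EuclideanSpace ℝ (Fin d)) (y : Fin n → EuclideanSpace ℝ (Fin d)) :
    (1 / (2 * L)) * ((n : ℝ)⁻¹ * ∑ i, ‖gradient (f i) (y i) - gradient (f i) xstar‖ ^ 2)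
      ≤ F x - F xstar + ∑ i, bregDiv (f i) (y i) xstar
        - ((n : ℝ)⁻¹ * ∑ i, bregDiv (f i) x xstar
            + (((n : ℝ) - 1) / n) * ∑ i, bregDiv (f i) (y i) xstar) := by
  have hnR : (0:ℝ) < n := by exact_mod_cast Nat.lt_of_lt_of_le Nat.zero_lt_one hn
  have hne : (n:ℝ) ≠ 0 := ne_of_gt hnR
  -- gradient of F at xstar is zero
  have hFd : HasFDerivAt F ((n:ℝ)⁻¹ • ∑ i, (toDual ℝ (EuclideanSpace ℝ (Fin d)))
      (gradient (f i) xstar)) xstar := by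
    rw [hF]
    have hsum : HasFDerivAt (fun z => ∑ i, f i z)
        (∑ i, (toDual ℝ (EuclideanSpace ℝ (Fin d))) (gradient (f i) xstar)) xstar :=
      HasFDerivAt.fun_sum fun i _ => ((hdiff i) xstar).hasGradientAt.hasFDerivAt
    simpa [smul_eq_mul] using hsum.const_mul ((n:ℝ)⁻¹)
  have hloc : IsLocalMin F xstar := by
    apply IsMinOn.isLocalMin (s := Set.univ)
    · intro z _; exact hmin z
    · exact Filter.univ_mem
  have hzero : (∑ i, gradient (f i) xstar) = 0 := by
    have h0 := hloc.hasFDerivAt_eq_zero hFd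
    have h1 : (∑ i, (toDual ℝ (EuclideanSpace ℝ (Fin d))) (gradient (f i) xstar)) = 0 := by
      have := smul_eq_zero.1 h0
      rcases this with h | h
      · exact absurd h (inv_ne_zero hne)
      · exact h
    have h2 : (toDual ℝ (EuclideanSpace ℝ (Fin d))) (∑ i, gradient (f i) xstar) = 0 := by
      rw [map_sum]; exact h1
    exact (toDual ℝ (EuclideanSpace ℝ (Fin d))).map_eq_zero_iff.1 h2
  -- the inner-product correction term vanishes
  have hip : (∑ i, @inner ℝ _ _ (gradient (f i) xstar) (x - xstar)) = 0 := by
    rw [← sum_inner, hzero, inner_zero_left]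
  -- RHS equals (1/n) * ∑ bregDiv (f i) (y i) xstar
  have hRHS : F x - F xstar + ∑ i, bregDiv (f i) (y i) xstar
        - ((n : ℝ)⁻¹ * ∑ i, bregDiv (f i) x xstar
            + (((n : ℝ) - 1) / n) * ∑ i, bregDiv (f i) (y i) xstar)
      = (n : ℝ)⁻¹ * ∑ i, bregDiv (f i) (y i) xstar := by
    have hFx : F x - F xstar - (n:ℝ)⁻¹ * ∑ i, bregDiv (f i) x xstar = 0 := by
      rw [hF]
      simp only [bregDiv]
      rw [Finset.sum_sub_distrib, Finset.sum_sub_distrib, hip]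
      ring
    have hcoef : (1 : ℝ) - ((n : ℝ) - 1) / n = (n:ℝ)⁻¹ := by
      field_simp
      ring
    linear_combination hFx + (∑ i, bregDiv (f i) (y i) xstar) * hcoef
  rw [hRHS]
  -- termwise cocoercivity
  have hterm : ∀ i, 1 / (2 * L) * ‖gradient (f i) (y i) - gradient (f i) xstar‖ ^ 2
      ≤ bregDiv (f i) (y i) xstar := by
    intro i
    exact cocoercivity hL (hconv i) (hdiff i) (hsmooth i) xstar (y i)
  calc (1 / (2 * L)) * ((n : ℝ)⁻¹ * ∑ i, ‖gradient (f i) (y i) - gradient (f i) xstar‖ ^ 2)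
      = (n : ℝ)⁻¹ * ∑ i, 1 / (2 * L) * ‖gradient (f i) (y i) - gradient (f i) xstar‖ ^ 2 := by
        simp only [Finset.mul_sum]
        exact Finset.sum_congr rfl fun i _ => by ring
    _ ≤ (n : ℝ)⁻¹ * ∑ i, bregDiv (f i) (y i) xstar := by
        apply mul_le_mul_of_nonneg_left _ (by positivity)
        exact Finset.sum_le_sum fun i _ => hterm i
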